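/- Let dμ and dν be bounded ℝ^k-valued measures on a measurable space X, and for ε ∈ ℝ set dμ_ε := dμ + ε dν with decompositions dμ_ε = N_ε |dμ_ε| and dν = A_ε |dμ_ε| + dν_s^ε where dν_s^ε ⊥ |dμ_ε|, and let F(ε) := ∫_X |dμ_ε|. Then F(ε) is Lipschitz continuous in ε, and for every ε₁ ∈ ℝ the one-sided derivatives exist and satisfy F'(ε₁+) = ∫_X N_{ε₁}·A_{ε₁} |dμ_{ε₁}| + ∫_X |dν_s^{ε₁}| and F'(ε₁−) = ∫_X N_{ε₁}·A_{ε₁} |dμ_{ε₁}| − ∫_X |dν_s^{ε₁}|. -/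

import Mathlib

open MeasureTheory Filter Set Topology
open scoped ENNReal NNReal InnerProductSpace

/-- If two vector measures given by densities w.r.t. finite measures agree on all
measurable sets, then the integrals of the norms of the densities agree. -/
theorem fv_norm_density_eq {X : Type*} [MeasurableSpace X]
    {E : Type*} [NormedAddCommGroup E] [NormedSpace ℝ E] [CompleteSpace E]
    (lam rho : Measure X) [IsFiniteMeasure lam] [IsFiniteMeasure rho]
    {f g : X → E} (hf : Integrable f lam) (hg : Integrable g rho)
    (h : ∀ S : Set X, MeasurableSet S → ∫ x in S, f x ∂lam = ∫ x in S, g x ∂rho) :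
    ∫ x, ‖f x‖ ∂lam = ∫ x, ‖g x‖ ∂rho := by
  set σ : Measure X := lam + rho with hσdef
  have hlσ : lam ≪ σ := Measure.absolutelyContinuous_of_le (Measure.le_add_right le_rfl)
  have hrσ : rho ≪ σ := Measure.absolutelyContinuous_of_le (Measure.le_add_left le_rfl)
  set a : X → ℝ := fun x => (lam.rnDeriv σ x).toReal with ha
  set b : X → ℝ := fun x => (rho.rnDeriv σ x).toReal with hb
  have hfa : Integrable (fun x => a x • f x) σ := (integrable_rnDeriv_smul_iff hlσ).mpr hf
  have hgb : Integrable (fun x => b x • g x) σ := (integrable_rnDeriv_smul_iff hrσ).mpr hg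
  have key : (fun x => a x • f x) =ᵐ[σ] fun x => b x • g x := by
    have hz : (fun x => a x • f x - b x • g x) =ᵐ[σ] 0 := by
      refine (hfa.sub hgb).ae_eq_zero_of_forall_setIntegral_eq_zero (fun S hS _ => ?_)
      simp only [Pi.sub_apply]
      rw [integral_sub hfa.integrableOn hgb.integrableOn,
        setIntegral_rnDeriv_smul hlσ hS, setIntegral_rnDeriv_smul hrσ hS, h S hS, sub_self]
    filter_upwards [hz] with x hx
    exact sub_eq_zero.mp hx
  have hab : ∀ x, a x • f x = b x • g x → a x * ‖f x‖ = b x * ‖g x‖ := by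
    intro x hx
    have h1 : ‖a x • f x‖ = ‖b x • g x‖ := by rw [hx]
    rwa [norm_smul, norm_smul, Real.norm_of_nonneg ENNReal.toReal_nonneg,
      Real.norm_of_nonneg ENNReal.toReal_nonneg] at h1
  calc ∫ x, ‖f x‖ ∂lam = ∫ x, a x • ‖f x‖ ∂σ := (integral_rnDeriv_smul hlσ).symm
    _ = ∫ x, b x • ‖g x‖ ∂σ := by
        refine integral_congr_ae ?_
        filter_upwards [key] with x hx
        simpa [smul_eq_mul] using hab x hx
    _ = ∫ x, ‖g x‖ ∂rho := integral_rnDeriv_smul hrσ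

/-- If a vector measure `f·lam` splits as `p·μ + q·ν` with `ν ⟂ μ`, then the total
variation splits as well. -/
theorem fv_norm_split {X : Type*} [MeasurableSpace X]
    {E : Type*} [NormedAddCommGroup E] [NormedSpace ℝ E] [CompleteSpace E]
    (lam μ ν : Measure X) [IsFiniteMeasure lam] [IsFiniteMeasure μ] [IsFiniteMeasure ν]
    (hsing : ν.MutuallySingular μ)
    {f : X → E} (hf : Integrable f lam)
    {p q : X → E} (hp : Integrable p μ) (hq : Integrable q ν)
    (h : ∀ S : Set X, MeasurableSet S →
      ∫ x in S, f x ∂lam = (∫ x in S, p x ∂μ) + ∫ x in S, q x ∂ν) :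
    ∫ x, ‖f x‖ ∂lam = (∫ x, ‖p x‖ ∂μ) + ∫ x, ‖q x‖ ∂ν := by
  classical
  obtain ⟨s, hs, hνs, hμsc⟩ := hsing
  set g : X → E := fun x => if x ∈ s then p x else q x with hg
  have hgμ : g =ᵐ[μ] p := by
    have hmem : ∀ᵐ x ∂μ, x ∈ s := by
      rw [ae_iff]; exact hμsc
    filter_upwards [hmem] with x hx; simp [hg, hx]
  have hgν : g =ᵐ[ν] q := by
    have hmem : ∀ᵐ x ∂ν, x ∉ s := by
      rw [ae_iff]; simpa using hνs
    filter_upwards [hmem] with x hx; simp [hg, hx]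
  have hgμint : Integrable g μ := hp.congr hgμ.symm
  have hgνint : Integrable g ν := hq.congr hgν.symm
  have hgint : Integrable g (μ + ν) := integrable_add_measure.mpr ⟨hgμint, hgνint⟩
  have hset : ∀ S : Set X, MeasurableSet S →
      ∫ x in S, f x ∂lam = ∫ x in S, g x ∂(μ + ν) := by
    intro S hS
    rw [Measure.restrict_add, integral_add_measure hgμint.integrableOn hgνint.integrableOn,
      integral_congr_ae (ae_restrict_of_ae hgμ), integral_congr_ae (ae_restrict_of_ae hgν)]
    exact h S hS
  rw [fv_norm_density_eq lam (μ + ν) hf hgint hset,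
    integral_add_measure hgμint.norm hgνint.norm,
    integral_congr_ae (hgμ.mono fun x hx => by rw [hx]),
    integral_congr_ae (hgν.mono fun x hx => by rw [hx])]

theorem fv_hasDerivAt_norm_line {E : Type*} [NormedAddCommGroup E] [InnerProductSpace ℝ E]
    (v w : E) (hv : ‖v‖ = 1) :
    HasDerivAt (fun t : ℝ => ‖v + t • w‖) ⟪v, w⟫_ℝ 0 := by
  have hc : HasDerivAt (fun t : ℝ => v + t • w) w 0 := by
    simpa using ((hasDerivAt_id (0:ℝ)).smul_const w).const_add v
  have hq : HasDerivAt (fun t : ℝ => ⟪v + t • w, v + t • w⟫_ℝ) (2 * ⟪v, w⟫_ℝ) 0 := by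
    have := hc.inner ℝ hc
    simp only [zero_smul, add_zero] at this
    exact this.congr_deriv (by rw [real_inner_comm]; ring)
  have hq0 : ⟪v + (0:ℝ) • w, v + (0:ℝ) • w⟫_ℝ = 1 := by
    simp [real_inner_self_eq_norm_sq, hv]
  have hs : HasDerivAt Real.sqrt (1 / (2 * Real.sqrt 1)) (⟪v + (0:ℝ) • w, v + (0:ℝ) • w⟫_ℝ) := by
    rw [hq0]; exact Real.hasDerivAt_sqrt one_ne_zero
  have hcomp := hs.comp (0:ℝ) hq
  have heq : (Real.sqrt ∘ fun t : ℝ => ⟪v + t • w, v + t • w⟫_ℝ)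
      = fun t : ℝ => ‖v + t • w‖ := by
    funext t
    simp [Function.comp, real_inner_self_eq_norm_sq, Real.sqrt_sq (norm_nonneg _)]
  rw [heq] at hcomp
  exact hcomp.congr_deriv (by rw [Real.sqrt_one]; ring)

/-- **First variation of the generalized area functional (Theorem B).**
A bounded `ℝ^k`-valued measure is modeled by its polar decomposition: a finite
total-variation measure together with a density of norm one a.e.  Here
`μtv ε`, `N ε` encode `dμ_ε = N_ε |dμ_ε|` (where `dμ_ε := dμ + ε dν`, so `dμ = dμ_0`),
`νtv`, `Nν` encode the polar decomposition `dν = Nν |dν|`, and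
`A ε`, `νstv ε`, `Ns ε` encode the Radon–Nikodym decomposition
`dν = A_ε |dμ_ε| + dν_s^ε` with `dν_s^ε = Ns_ε |dν_s^ε| ⊥ |dμ_ε|`.
The functional is `F(ε) = ∫_X |dμ_ε|`; it is Lipschitz and its one-sided
derivatives are `F'(ε₁±) = ∫ N_{ε₁}·A_{ε₁} |dμ_{ε₁}| ± ∫ |dν_s^{ε₁}|`. -/
theorem first_variation_of_generalized_area
    (X : Type*) [MeasurableSpace X] (k : ℕ)
    (μtv : ℝ → Measure X) (N A : ℝ → X → EuclideanSpace ℝ (Fin k))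
    (νtv : Measure X) (Nν : X → EuclideanSpace ℝ (Fin k))
    (νstv : ℝ → Measure X) (Ns : ℝ → X → EuclideanSpace ℝ (Fin k))
    (hμfin : ∀ ε, IsFiniteMeasure (μtv ε))
    (hνfin : IsFiniteMeasure νtv)
    (hνsfin : ∀ ε, IsFiniteMeasure (νstv ε))
    (hN1 : ∀ ε, ∀ᵐ x ∂(μtv ε), ‖N ε x‖ = 1)
    (hNν1 : ∀ᵐ x ∂νtv, ‖Nν x‖ = 1)
    (hNs1 : ∀ ε, ∀ᵐ x ∂(νstv ε), ‖Ns ε x‖ = 1)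
    (hNint : ∀ ε, Integrable (N ε) (μtv ε))
    (hAint : ∀ ε, Integrable (A ε) (μtv ε))
    (hNνint : Integrable Nν νtv)
    (hNsint : ∀ ε, Integrable (Ns ε) (νstv ε))
    (hsing : ∀ ε, (νstv ε).MutuallySingular (μtv ε))
    (hadd : ∀ ε : ℝ, ∀ S : Set X, MeasurableSet S →
      ∫ x in S, N ε x ∂(μtv ε) = (∫ x in S, N 0 x ∂(μtv 0)) + ε • ∫ x in S, Nν x ∂νtv)
    (hRN : ∀ ε : ℝ, ∀ S : Set X, MeasurableSet S →
      ∫ x in S, Nν x ∂νtv = (∫ x in S, A ε x ∂(μtv ε)) + ∫ x in S, Ns ε x ∂(νstv ε)) :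
    (∃ K : ℝ≥0, LipschitzWith K (fun ε : ℝ => (μtv ε Set.univ).toReal)) ∧
    ∀ ε₁ : ℝ,
      HasDerivWithinAt (fun ε : ℝ => (μtv ε Set.univ).toReal)
        ((∫ x, ⟪N ε₁ x, A ε₁ x⟫_ℝ ∂(μtv ε₁)) + (νstv ε₁ Set.univ).toReal) (Set.Ici ε₁) ε₁ ∧
      HasDerivWithinAt (fun ε : ℝ => (μtv ε Set.univ).toReal)
        ((∫ x, ⟪N ε₁ x, A ε₁ x⟫_ℝ ∂(μtv ε₁)) - (νstv ε₁ Set.univ).toReal) (Set.Iic ε₁) ε₁ := by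
  haveI := hνfin
  haveI := hμfin
  haveI := hνsfin
  -- Step A: the vector measure dμ_{ε₁+t} in terms of the decomposition at ε₁
  have stepA : ∀ ε₁ t : ℝ, ∀ S : Set X, MeasurableSet S →
      ∫ x in S, N (ε₁ + t) x ∂(μtv (ε₁ + t)) =
        (∫ x in S, (N ε₁ x + t • A ε₁ x) ∂(μtv ε₁)) + ∫ x in S, t • Ns ε₁ x ∂(νstv ε₁) := by
    intro ε₁ t S hS
    have h1 := hadd ε₁ S hS
    have h2 := hRN ε₁ S hS
    have hsm : Integrable (fun x => t • A ε₁ x) ((μtv ε₁).restrict S) := by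
      exact ((hAint ε₁).smul t).integrableOn
    rw [hadd (ε₁ + t) S hS, integral_add (hNint ε₁).integrableOn hsm, integral_smul,
      integral_smul, h1, h2, add_smul, smul_add, smul_add]
    abel
  -- Key identity for the area functional
  have key : ∀ ε₁ t : ℝ, (μtv (ε₁ + t) Set.univ).toReal =
      (∫ x, ‖N ε₁ x + t • A ε₁ x‖ ∂(μtv ε₁)) + |t| * (νstv ε₁ Set.univ).toReal := by
    intro ε₁ t
    have hp : Integrable (fun x => N ε₁ x + t • A ε₁ x) (μtv ε₁) := by
      exact (hNint ε₁).add ((hAint ε₁).smul t)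
    have hq : Integrable (fun x => t • Ns ε₁ x) (νstv ε₁) := by
      exact (hNsint ε₁).smul t
    have hsplit := fv_norm_split (μtv (ε₁ + t)) (μtv ε₁) (νstv ε₁) (hsing ε₁)
      (hNint (ε₁ + t)) hp hq (stepA ε₁ t)
    have hL : ∫ x, ‖N (ε₁ + t) x‖ ∂(μtv (ε₁ + t)) = (μtv (ε₁ + t) Set.univ).toReal := by
      rw [integral_congr_ae ((hN1 (ε₁ + t)) : (fun x => ‖N (ε₁ + t) x‖) =ᵐ[μtv (ε₁ + t)] fun _ => 1)]
      simp [Measure.real]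
    have hR : ∫ x, ‖t • Ns ε₁ x‖ ∂(νstv ε₁) = |t| * (νstv ε₁ Set.univ).toReal := by
      simp_rw [norm_smul, Real.norm_eq_abs]
      rw [integral_const_mul,
        integral_congr_ae ((hNs1 ε₁) : (fun x => ‖Ns ε₁ x‖) =ᵐ[νstv ε₁] fun _ => 1)]
      simp [Measure.real]
    rw [← hL, hsplit, hR]
  -- Total mass identity: ∫‖A ε‖ + |νs ε| = |ν|
  have hAc : ∀ ε₁ : ℝ, (∫ x, ‖A ε₁ x‖ ∂(μtv ε₁)) + (νstv ε₁ Set.univ).toReal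
      = (νtv Set.univ).toReal := by
    intro ε₁
    have hsplit := fv_norm_split νtv (μtv ε₁) (νstv ε₁) (hsing ε₁)
      hNνint (hAint ε₁) (hNsint ε₁) (hRN ε₁)
    have hL : ∫ x, ‖Nν x‖ ∂νtv = (νtv Set.univ).toReal := by
      rw [integral_congr_ae (hNν1 : (fun x => ‖Nν x‖) =ᵐ[νtv] fun _ => 1)]; simp [Measure.real]
    have hR : ∫ x, ‖Ns ε₁ x‖ ∂(νstv ε₁) = (νstv ε₁ Set.univ).toReal := by
      rw [integral_congr_ae ((hNs1 ε₁) : (fun x => ‖Ns ε₁ x‖) =ᵐ[νstv ε₁] fun _ => 1)]; simp [Measure.real]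
    rw [← hL, hsplit, hR]
  constructor
  · -- Lipschitz
    refine ⟨(νtv Set.univ).toNNReal, LipschitzWith.of_dist_le_mul fun b a => ?_⟩
    have hc : ((νtv Set.univ).toNNReal : ℝ) = (νtv Set.univ).toReal := rfl
    rw [Real.dist_eq, Real.dist_eq, hc]
    set t := b - a with ht
    have hb : (μtv b Set.univ).toReal
        = (∫ x, ‖N a x + t • A a x‖ ∂(μtv a)) + |t| * (νstv a Set.univ).toReal := by
      have := key a t; rwa [show a + t = b by rw [ht]; ring] at this
    have ha : (μtv a Set.univ).toReal = ∫ x, ‖N a x‖ ∂(μtv a) := by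
      rw [integral_congr_ae ((hN1 a) : (fun x => ‖N a x‖) =ᵐ[μtv a] fun _ => 1)]; simp [Measure.real]
    have hint1 : Integrable (fun x => ‖N a x + t • A a x‖) (μtv a) := by
      exact ((hNint a).add ((hAint a).smul t)).norm
    have hint2 : Integrable (fun x => ‖N a x‖) (μtv a) := (hNint a).norm
    have hdiff : |(∫ x, ‖N a x + t • A a x‖ ∂(μtv a)) - ∫ x, ‖N a x‖ ∂(μtv a)|
        ≤ |t| * ∫ x, ‖A a x‖ ∂(μtv a) := by
      rw [← integral_sub hint1 hint2]
      calc |∫ x, (‖N a x + t • A a x‖ - ‖N a x‖) ∂(μtv a)|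
          ≤ ∫ x, |‖N a x + t • A a x‖ - ‖N a x‖| ∂(μtv a) :=
            by simpa [Real.norm_eq_abs] using
              norm_integral_le_integral_norm (μ := μtv a)
                (fun x => ‖N a x + t • A a x‖ - ‖N a x‖)
        _ ≤ ∫ x, |t| * ‖A a x‖ ∂(μtv a) := by
            refine integral_mono (hint1.sub hint2).abs ((hAint a).norm.const_mul _) fun x => ?_
            calc |‖N a x + t • A a x‖ - ‖N a x‖| ≤ ‖(N a x + t • A a x) - N a x‖ :=
                abs_norm_sub_norm_le _ _
              _ = |t| * ‖A a x‖ := by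
                  rw [add_sub_cancel_left, norm_smul, Real.norm_eq_abs]
        _ = |t| * ∫ x, ‖A a x‖ ∂(μtv a) := integral_const_mul _ _
    have hcnn : (0:ℝ) ≤ (νstv a Set.univ).toReal := ENNReal.toReal_nonneg
    calc |(μtv b Set.univ).toReal - (μtv a Set.univ).toReal|
        = |((∫ x, ‖N a x + t • A a x‖ ∂(μtv a)) - ∫ x, ‖N a x‖ ∂(μtv a))
            + |t| * (νstv a Set.univ).toReal| := by rw [hb, ha]; ring_nf
      _ ≤ |(∫ x, ‖N a x + t • A a x‖ ∂(μtv a)) - ∫ x, ‖N a x‖ ∂(μtv a)|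
            + |t| * (νstv a Set.univ).toReal := by
          refine (abs_add_le _ _).trans ?_
          gcongr
          exact le_of_eq (abs_of_nonneg (by positivity))
      _ ≤ |t| * (∫ x, ‖A a x‖ ∂(μtv a)) + |t| * (νstv a Set.univ).toReal := by gcongr
      _ = (νtv Set.univ).toReal * |b - a| := by rw [← mul_add, hAc a]; ring
  · -- one-sided derivatives
    intro ε₁
    set c : ℝ := (νstv ε₁ Set.univ).toReal with hcdef
    set D : ℝ := ∫ x, ⟪N ε₁ x, A ε₁ x⟫_ℝ ∂(μtv ε₁) with hDdef
    set H : ℝ → ℝ := fun t => ∫ x, ‖N ε₁ x + t • A ε₁ x‖ ∂(μtv ε₁) with hHdef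
    have keyF : ∀ y : ℝ, (μtv y Set.univ).toReal = H (y - ε₁) + |y - ε₁| * c := by
      intro y
      have := key ε₁ (y - ε₁)
      rwa [show ε₁ + (y - ε₁) = y by ring] at this
    have hHd : HasDerivAt H D 0 := by
      have hmeas : ∀ᶠ t in 𝓝 (0:ℝ),
          AEStronglyMeasurable (fun x => ‖N ε₁ x + t • A ε₁ x‖) (μtv ε₁) :=
        Eventually.of_forall fun t => ((hNint ε₁).1.add ((hAint ε₁).1.const_smul t)).norm
      have hint0 : Integrable (fun x => ‖N ε₁ x + (0:ℝ) • A ε₁ x‖) (μtv ε₁) := by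
        simpa using (hNint ε₁).norm
      have hF'meas : AEStronglyMeasurable (fun x => ⟪N ε₁ x, A ε₁ x⟫_ℝ) (μtv ε₁) :=
        (hNint ε₁).1.inner (hAint ε₁).1
      have hlip : ∀ᵐ x ∂(μtv ε₁), LipschitzOnWith (Real.nnabs ‖A ε₁ x‖)
          (fun t : ℝ => ‖N ε₁ x + t • A ε₁ x‖) (Metric.ball (0:ℝ) 1) := by
        refine ae_of_all _ fun x => LipschitzWith.lipschitzOnWith ?_
        refine LipschitzWith.of_dist_le_mul fun t t' => ?_
        rw [Real.dist_eq, Real.dist_eq]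
        calc |‖N ε₁ x + t • A ε₁ x‖ - ‖N ε₁ x + t' • A ε₁ x‖|
            ≤ ‖(N ε₁ x + t • A ε₁ x) - (N ε₁ x + t' • A ε₁ x)‖ := abs_norm_sub_norm_le _ _
          _ = ‖(t - t') • A ε₁ x‖ := by rw [add_sub_add_left_eq_sub, ← sub_smul]
          _ = ↑(Real.nnabs ‖A ε₁ x‖) * |t - t'| := by
              rw [norm_smul, Real.norm_eq_abs, Real.coe_nnabs, abs_norm]; ring
      have hdiff : ∀ᵐ x ∂(μtv ε₁), HasDerivAt (fun t : ℝ => ‖N ε₁ x + t • A ε₁ x‖)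
          (⟪N ε₁ x, A ε₁ x⟫_ℝ) 0 := by
        filter_upwards [hN1 ε₁] with x hx
        exact fv_hasDerivAt_norm_line _ _ hx
      exact (hasDerivAt_integral_of_dominated_loc_of_lip (Metric.ball_mem_nhds 0 one_pos) hmeas hint0 hF'meas
        hlip (hAint ε₁).norm hdiff).2
    have hφ : HasDerivAt (fun ε : ℝ => H (ε - ε₁)) D ε₁ := by
      refine HasDerivAt.comp_sub_const ε₁ ε₁ ?_
      rw [sub_self]; exact hHd
    have hlin : HasDerivAt (fun ε : ℝ => (ε - ε₁) * c) c ε₁ := by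
      simpa using ((hasDerivAt_id ε₁).sub_const ε₁).mul_const c
    constructor
    · have hψ : HasDerivAt (fun ε : ℝ => H (ε - ε₁) + (ε - ε₁) * c) (D + c) ε₁ := hφ.add hlin
      refine (hψ.hasDerivWithinAt).congr (fun y hy => ?_) ?_
      · rw [keyF y, abs_of_nonneg (sub_nonneg.mpr hy)]
      · rw [keyF ε₁]; simp
    · have hψ : HasDerivAt (fun ε : ℝ => H (ε - ε₁) + -((ε - ε₁) * c)) (D - c) ε₁ := by
        have h2 : HasDerivAt (fun ε : ℝ => -((ε - ε₁) * c)) (-c) ε₁ := hlin.neg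
        have := hφ.add h2
        rwa [← sub_eq_add_neg] at this
      refine (hψ.hasDerivWithinAt).congr (fun y hy => ?_) ?_
      · rw [keyF y, abs_of_nonpos (sub_nonpos.mpr hy), neg_mul]
      · rw [keyF ε₁]; simp
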